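/- The ℝ-linear endomorphism ψ_Z of M_{n×m}(ℂ) × M_{n×m}(ℂ) defined by ψ_Z(β₁, β₂) = (β₁Z + β₂, conj(β₁)Zᵀ + conj(β₂)) is bijective, and the absolute value of its determinant as an ℝ-linear map equals 2^{2nm}·(det Y)^{2n}. In particular, the image under ψ_Z of any full-rank ℤ-lattice of M_{n×m}(ℂ) × M_{n×m}(ℂ) is again a full-rank ℤ-lattice. -/

import Mathlib

open Matrix ComplexOrder

noncomputable section

/-- The entrywise complex conjugate of a matrix. -/
def matConj {n m : ℕ} (M : Matrix (Fin n) (Fin m) ℂ) : Matrix (Fin n) (Fin m) ℂ :=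
  M.map (starRingEnd ℂ)

/-- The `ℝ`-linear endomorphism `ψ_Z(β₁, β₂) = (β₁Z + β₂, conj(β₁)Zᵀ + conj(β₂))` of
`M_{n×m}(ℂ) × M_{n×m}(ℂ)`. -/
def psiZ {n m : ℕ} (Z : Matrix (Fin m) (Fin m) ℂ) :
    (Matrix (Fin n) (Fin m) ℂ × Matrix (Fin n) (Fin m) ℂ) →ₗ[ℝ]
      (Matrix (Fin n) (Fin m) ℂ × Matrix (Fin n) (Fin m) ℂ) where
  toFun b := (b.1 * Z + b.2, matConj b.1 * Zᵀ + matConj b.2)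
  map_add' x y := by
    ext i j <;>
      simp [matConj, Matrix.add_mul, Matrix.add_apply, Matrix.mul_apply, Matrix.map_apply,
        Finset.sum_add_distrib, add_mul, map_add] <;> ring
  map_smul' c x := by
    ext i j <;>
      simp [matConj, Matrix.smul_apply, Matrix.mul_apply, Matrix.map_apply, Finset.mul_sum,
        Complex.real_smul, smul_mul_assoc, _root_.map_mul, Complex.conj_ofReal, mul_assoc]

/-- A full-rank `ℤ`-lattice in a real topological vector space: a `ℤ`-submodule which is
discrete and spans the whole space over `ℝ`. -/
def IsFullLattice {E : Type*} [AddCommGroup E] [Module ℝ E] [TopologicalSpace E]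
    (L : Submodule ℤ E) : Prop :=
  DiscreteTopology L ∧ Submodule.span ℝ (L : Set E) = ⊤

/-! ### Auxiliary lemmas -/

open Complex

lemma aux_det_fromBlocks_cplx {ι : Type*} [Fintype ι] [DecidableEq ι] (X Y : Matrix ι ι ℂ) :
    (fromBlocks X (-Y) Y X).det = (X - I • Y).det * (X + I • Y).det := by
  have hL : (fromBlocks 1 0 (-(I • 1)) 1 : Matrix (ι ⊕ ι) (ι ⊕ ι) ℂ).det = 1 := by
    rw [det_fromBlocks_zero₁₂]; simp
  have hR : (fromBlocks 1 0 (I • 1) 1 : Matrix (ι ⊕ ι) (ι ⊕ ι) ℂ).det = 1 := by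
    rw [det_fromBlocks_zero₁₂]; simp
  have key : fromBlocks 1 0 (-(I • 1)) 1 * fromBlocks X (-Y) Y X * fromBlocks 1 0 (I • 1) 1
      = fromBlocks (X - I • Y) (-Y) 0 (X + I • Y) := by
    rw [fromBlocks_multiply, fromBlocks_multiply]
    simp [Matrix.smul_mul, Matrix.mul_smul, smul_smul, Complex.I_mul_I, sub_eq_add_neg]
    abel
  have h2 := congrArg Matrix.det key
  rw [det_mul, det_mul, hL, hR, one_mul, mul_one, det_fromBlocks_zero₂₁] at h2
  exact h2

/-- det of the realification block matrix. -/
lemma aux_det_realify {ι : Type*} [Fintype ι] [DecidableEq ι] (A : Matrix ι ι ℂ) :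
    (fromBlocks (A.map Complex.re) (-(A.map Complex.im)) (A.map Complex.im)
        (A.map Complex.re)).det = Complex.normSq A.det := by
  set X : Matrix ι ι ℂ := (A.map Complex.re).map (Complex.ofReal) with hX
  set Y : Matrix ι ι ℂ := (A.map Complex.im).map (Complex.ofReal) with hY
  have hcast : ((fromBlocks (A.map Complex.re) (-(A.map Complex.im)) (A.map Complex.im)
      (A.map Complex.re)).det : ℂ) = (fromBlocks X (-Y) Y X).det := by
    rw [show ((fromBlocks (A.map Complex.re) (-(A.map Complex.im)) (A.map Complex.im)
        (A.map Complex.re)).det : ℂ) = Complex.ofRealHom (fromBlocks (A.map Complex.re)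
        (-(A.map Complex.im)) (A.map Complex.im) (A.map Complex.re)).det from rfl,
      RingHom.map_det]
    congr 1
    ext (i|i) (j|j) <;> simp [X, Y, fromBlocks, RingHom.mapMatrix_apply]
  have hXY1 : X + I • Y = A := by
    ext i j
    simp [X, Y, Matrix.add_apply, Matrix.smul_apply, Complex.ext_iff]
  have hXY2 : X - I • Y = A.map (starRingEnd ℂ) := by
    ext i j
    simp [X, Y, Matrix.sub_apply, Matrix.smul_apply, Complex.ext_iff]
  have : ((fromBlocks (A.map Complex.re) (-(A.map Complex.im)) (A.map Complex.im)
      (A.map Complex.re)).det : ℂ) = (Complex.normSq A.det : ℂ) := by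
    rw [hcast, aux_det_fromBlocks_cplx, hXY1, hXY2, ← RingHom.mapMatrix_apply,
      ← RingHom.map_det, ← Complex.normSq_eq_conj_mul_self]
  exact_mod_cast this

/-- realification equivalence of `ℂ^ι`. -/
def realifyEquiv (ι : Type*) : (ι → ℂ) ≃ₗ[ℝ] (ι ⊕ ι → ℝ) where
  toFun v := Sum.elim (fun i => (v i).re) (fun i => (v i).im)
  invFun w i := ⟨w (Sum.inl i), w (Sum.inr i)⟩
  map_add' x y := by funext i; cases i <;> simp
  map_smul' c x := by funext i; cases i <;> simp
  left_inv v := by funext i; simp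
  right_inv w := by funext i; cases i <;> simp

lemma aux_realify_conj {ι : Type*} [Fintype ι] [DecidableEq ι] (A : Matrix ι ι ℂ) :
    ((realifyEquiv ι : (ι → ℂ) →ₗ[ℝ] (ι ⊕ ι → ℝ)) ∘ₗ
        ((Matrix.toLin' A).restrictScalars ℝ) ∘ₗ
        ((realifyEquiv ι).symm : (ι ⊕ ι → ℝ) →ₗ[ℝ] (ι → ℂ)))
      = Matrix.toLin' (fromBlocks (A.map Complex.re) (-(A.map Complex.im))
          (A.map Complex.im) (A.map Complex.re)) := by
  apply LinearMap.ext
  intro w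
  funext p
  cases p with
  | inl i =>
      simp [realifyEquiv, Matrix.toLin'_apply, Matrix.mulVec, dotProduct,
        Fintype.sum_sum_type, fromBlocks, Complex.re_sum, Complex.mul_re,
        Finset.sum_sub_distrib, Complex.ext_iff, sub_eq_add_neg]
      rw [Finset.sum_add_distrib]
      simp
  | inr i =>
      simp [realifyEquiv, Matrix.toLin'_apply, Matrix.mulVec, dotProduct,
        Fintype.sum_sum_type, fromBlocks, Complex.im_sum, Complex.mul_im,
        Finset.sum_add_distrib, Complex.ext_iff]
      ring

/-- the real determinant of a complex matrix acting on `ℂ^ι`. -/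
lemma aux_det_restrict {ι : Type*} [Fintype ι] [DecidableEq ι] (A : Matrix ι ι ℂ) :
    LinearMap.det ((Matrix.toLin' A).restrictScalars ℝ) = Complex.normSq A.det := by
  rw [← LinearMap.det_conj (((Matrix.toLin' A)).restrictScalars ℝ) (realifyEquiv ι),
    aux_realify_conj, LinearMap.det_toLin', aux_det_realify]

/-- The ℂ-linear part of ψ_Z. -/
def Tmap {n m : ℕ} (Z : Matrix (Fin m) (Fin m) ℂ) :
    (Matrix (Fin n) (Fin m) ℂ × Matrix (Fin n) (Fin m) ℂ) →ₗ[ℂ]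
      (Matrix (Fin n) (Fin m) ℂ × Matrix (Fin n) (Fin m) ℂ) where
  toFun b := (b.1 * Z + b.2, b.1 * Zᴴ + b.2)
  map_add' x y := by simp [Matrix.add_mul]; constructor <;> abel
  map_smul' c x := by simp [Matrix.smul_mul]

/-- juxtaposition equivalence. -/
def juxtEquiv (n m : ℕ) :
    (Matrix (Fin n) (Fin m) ℂ × Matrix (Fin n) (Fin m) ℂ) ≃ₗ[ℂ]
      ((Fin n × (Fin m ⊕ Fin m)) → ℂ) where
  toFun b p := Sum.elim (fun j => b.1 p.1 j) (fun j => b.2 p.1 j) p.2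
  invFun w := (fun i j => w (i, Sum.inl j), fun i j => w (i, Sum.inr j))
  map_add' x y := by funext p; rcases p with ⟨i, j | j⟩ <;> simp
  map_smul' c x := by funext p; rcases p with ⟨i, j | j⟩ <;> simp
  left_inv b := by ext i j <;> simp
  right_inv w := by funext p; rcases p with ⟨i, j | j⟩ <;> simp

def Bmat {m : ℕ} (n : ℕ) (Z : Matrix (Fin m) (Fin m) ℂ) :
    Matrix (Fin n × (Fin m ⊕ Fin m)) (Fin n × (Fin m ⊕ Fin m)) ℂ :=
  (blockDiagonal (fun _ : Fin n => (fromBlocks Z Zᴴ 1 1)ᵀ)).submatrix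
    ⇑(Equiv.prodComm (Fin n) (Fin m ⊕ Fin m)) ⇑(Equiv.prodComm _ _)

lemma aux_det_Bmat {m : ℕ} (n : ℕ) (Z : Matrix (Fin m) (Fin m) ℂ) :
    (Bmat n Z).det = (fromBlocks Z Zᴴ 1 1).det ^ n := by
  rw [Bmat, det_submatrix_equiv_self, det_blockDiagonal]
  simp [det_transpose]

lemma aux_Tmap_conj {n m : ℕ} (Z : Matrix (Fin m) (Fin m) ℂ) :
    ((juxtEquiv n m : _ →ₗ[ℂ] _) ∘ₗ Tmap (n := n) Z ∘ₗ
      ((juxtEquiv n m).symm : _ →ₗ[ℂ] _)) = Matrix.toLin' (Bmat n Z) := by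
  apply LinearMap.ext
  intro w
  funext p
  rcases p with ⟨i, j | j⟩ <;>
    simp [juxtEquiv, Tmap, Bmat, Matrix.toLin'_apply, Matrix.mulVec, dotProduct,
      Fintype.sum_prod_type, Fintype.sum_sum_type, blockDiagonal_apply, Matrix.mul_apply,
      Matrix.one_apply, Finset.sum_ite_eq, Finset.sum_ite_eq', apply_ite,
      Prod.swap, Equiv.prodComm] <;>
    exact congrArg (· + _) (Finset.sum_congr rfl fun _ _ => mul_comm (G := ℂ) _ _)

lemma aux_det_W {m : ℕ} (Z : Matrix (Fin m) (Fin m) ℂ) :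
    (fromBlocks Z Zᴴ (1 : Matrix (Fin m) (Fin m) ℂ) 1).det = (Z - Zᴴ).det := by
  have key : fromBlocks Z Zᴴ (1 : Matrix (Fin m) (Fin m) ℂ) 1 *
      (fromBlocks 1 0 (-1) 1 : Matrix (Fin m ⊕ Fin m) (Fin m ⊕ Fin m) ℂ)
        = fromBlocks (Z - Zᴴ) Zᴴ 0 1 := by
    rw [fromBlocks_multiply]
    simp [Matrix.mul_neg, sub_eq_add_neg]
  have h2 := congrArg Matrix.det key
  rw [det_mul, det_fromBlocks_zero₁₂, det_fromBlocks_zero₂₁] at h2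
  simpa using h2

/-- The conjugation-in-second-coordinate involution. -/
def sigma2 (n m : ℕ) :
    (Matrix (Fin n) (Fin m) ℂ × Matrix (Fin n) (Fin m) ℂ) →ₗ[ℝ]
      (Matrix (Fin n) (Fin m) ℂ × Matrix (Fin n) (Fin m) ℂ) where
  toFun b := (b.1, matConj b.2)
  map_add' x y := by ext i j <;> simp [matConj]
  map_smul' c x := by ext i j <;> simp [matConj, Complex.real_smul, Complex.conj_ofReal]

lemma aux_sigma2_invol (n m : ℕ) : sigma2 n m ∘ₗ sigma2 n m = LinearMap.id := by
  apply LinearMap.ext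
  intro b
  ext i j <;> simp [sigma2, matConj]

lemma aux_psi_decomp {n m : ℕ} (Z : Matrix (Fin m) (Fin m) ℂ) :
    psiZ (n := n) Z = sigma2 n m ∘ₗ ((Tmap (n := n) Z).restrictScalars ℝ) := by
  apply LinearMap.ext
  intro b
  ext i j <;>
    simp [psiZ, sigma2, Tmap, matConj, Matrix.mul_apply, Matrix.add_apply, map_add,
      map_sum, _root_.map_mul, conjTranspose_apply, transpose_apply]

/-- determinant of the restricted-scalars `Tmap`. -/
lemma aux_det_T {n m : ℕ} (Z : Matrix (Fin m) (Fin m) ℂ) :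
    LinearMap.det ((Tmap (n := n) Z).restrictScalars ℝ)
      = Complex.normSq ((Z - Zᴴ).det ^ n) := by
  have h1 : ((LinearEquiv.restrictScalars ℝ (juxtEquiv n m)) : _ →ₗ[ℝ] _) ∘ₗ
      ((Tmap (n := n) Z).restrictScalars ℝ) ∘ₗ
      (((LinearEquiv.restrictScalars ℝ (juxtEquiv n m)).symm) : _ →ₗ[ℝ] _)
      = (Matrix.toLin' (Bmat n Z)).restrictScalars ℝ := by
    apply LinearMap.ext
    intro w
    have := LinearMap.congr_fun (aux_Tmap_conj (n := n) Z) w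
    simpa using this
  rw [← LinearMap.det_conj (((Tmap (n := n) Z).restrictScalars ℝ))
      (LinearEquiv.restrictScalars ℝ (juxtEquiv n m)), h1, aux_det_restrict,
    aux_det_Bmat, aux_det_W]

/-- The map `ψ_Z` is bijective, the absolute value of its determinant as an `ℝ`-linear map
equals `2^{2nm}·(det Y)^{2n}` where `Y = (Z - Z*)/(2i)`, and the image under `ψ_Z` of any
full-rank `ℤ`-lattice is again a full-rank `ℤ`-lattice. -/
theorem statement15 {n m : ℕ} (hn : 1 ≤ n) (hm : 1 ≤ m)
    (Z : Matrix (Fin m) (Fin m) ℂ)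
    (hZ : ((2 * Complex.I)⁻¹ • (Z - Zᴴ)).PosDef) :
    Function.Bijective (psiZ (n := n) Z) ∧
    |LinearMap.det (psiZ (n := n) Z)| =
      2 ^ (2 * n * m) * (((2 * Complex.I)⁻¹ • (Z - Zᴴ)).det.re) ^ (2 * n) ∧
    (∀ L : Submodule ℤ (Matrix (Fin n) (Fin m) ℂ × Matrix (Fin n) (Fin m) ℂ),
      IsFullLattice L →
        IsFullLattice (L.map ((psiZ (n := n) Z).restrictScalars ℤ))) := by
  set Y := ((2 * Complex.I)⁻¹ • (Z - Zᴴ)) with hY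
  set r := Y.det.re with hr
  have hdetpos : (0 : ℂ) < Y.det := hZ.det_pos
  have hrpos : 0 < r := by
    have := (Complex.lt_def.mp hdetpos).1
    simpa [hr] using this
  have him : Y.det.im = 0 := ((Complex.lt_def.mp hdetpos).2).symm
  have hYdet : Y.det = (r : ℂ) := by
    apply Complex.ext <;> simp [hr, him]
  -- det of Z - Zᴴ
  have hZY : Z - Zᴴ = (2 * Complex.I) • Y := by
    rw [hY, smul_smul, mul_inv_cancel₀ (by simp : (2 * Complex.I) ≠ 0), one_smul]
  have hdetZY : (Z - Zᴴ).det = (2 * Complex.I) ^ m * (r : ℂ) := by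
    rw [hZY, Matrix.det_smul, hYdet]
    simp
  -- normSq computation
  have hnormSq : Complex.normSq ((Z - Zᴴ).det ^ n) = (4 ^ m * (r * r)) ^ n := by
    rw [map_pow, hdetZY, _root_.map_mul, map_pow]
    congr 2
    · norm_num [Complex.normSq_apply]
    · exact Complex.normSq_ofReal r
  have hdetT : LinearMap.det ((Tmap (n := n) Z).restrictScalars ℝ)
      = (4 ^ m * (r * r)) ^ n := by rw [aux_det_T, hnormSq]
  -- det of sigma2
  have hsig : LinearMap.det (sigma2 n m) * LinearMap.det (sigma2 n m) = 1 := by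
    rw [← LinearMap.det_comp, aux_sigma2_invol, LinearMap.det_id]
  have habs_sig : |LinearMap.det (sigma2 n m)| = 1 := by
    nlinarith [abs_nonneg (LinearMap.det (sigma2 n m)),
      abs_mul_abs_self (LinearMap.det (sigma2 n m))]
  -- det of psi
  have hdetpsi_abs : |LinearMap.det (psiZ (n := n) Z)| = (4 ^ m * (r * r)) ^ n := by
    rw [aux_psi_decomp, LinearMap.det_comp, abs_mul, habs_sig, one_mul, hdetT, _root_.abs_of_nonneg]
    positivity
  have hval : ((4 : ℝ) ^ m * (r * r)) ^ n = 2 ^ (2 * n * m) * r ^ (2 * n) := by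
    have h4 : (4 : ℝ) ^ m = 2 ^ (2 * m) := by
      rw [pow_mul]; norm_num
    rw [h4, mul_pow, ← pow_mul, ← sq, ← pow_mul, show 2 * m * n = 2 * n * m by ring]
  have habs : |LinearMap.det (psiZ (n := n) Z)| = 2 ^ (2 * n * m) * r ^ (2 * n) := by
    rw [hdetpsi_abs, hval]
  -- nonvanishing
  have hne : LinearMap.det (psiZ (n := n) Z) ≠ 0 := by
    intro h
    rw [h, abs_zero] at habs
    have : (0:ℝ) < 2 ^ (2 * n * m) * r ^ (2 * n) := by positivity
    linarith [habs ▸ this]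
  -- bijectivity
  have hbij : Function.Bijective (psiZ (n := n) Z) := by
    have he : ((LinearMap.equivOfDetNeZero (psiZ (n := n) Z) hne) :
        _ →ₗ[ℝ] _) = psiZ (n := n) Z := LinearEquiv.coe_ofIsUnitDet _
    have := (LinearMap.equivOfDetNeZero (psiZ (n := n) Z) hne).bijective
    rwa [show ⇑(LinearMap.equivOfDetNeZero (psiZ (n := n) Z) hne) = ⇑(psiZ (n := n) Z) from
      congrArg DFunLike.coe he] at this
  refine ⟨hbij, habs, ?_⟩
  -- lattice part
  intro L hL
  set V := Matrix (Fin n) (Fin m) ℂ × Matrix (Fin n) (Fin m) ℂ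
  have hcont : Continuous (psiZ (n := n) Z) := (psiZ (n := n) Z).continuous_of_finiteDimensional
  set ψe : V ≃ₗ[ℝ] V := LinearEquiv.ofBijective (psiZ (n := n) Z) hbij with hψe
  have hconti : Continuous (ψe.symm : V →ₗ[ℝ] V) :=
    (ψe.symm : V →ₗ[ℝ] V).continuous_of_finiteDimensional
  set h : V ≃ₜ V := ⟨ψe.toEquiv, hcont, hconti⟩ with hh
  have hset : ((L.map ((psiZ (n := n) Z).restrictScalars ℤ)) : Set V) = ⇑h '' (L : Set V) := by
    rw [Submodule.map_coe]
    rfl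
  constructor
  · -- discreteness
    have hd : DiscreteTopology (L : Set V) := hL.1
    have e2 : ↥(L : Set V) ≃ₜ ↥(⇑h '' (L : Set V)) := h.image (L : Set V)
    have e3 : ↥(⇑h '' (L : Set V)) ≃ₜ ↥((L.map ((psiZ (n := n) Z).restrictScalars ℤ)) : Set V) :=
      Homeomorph.setCongr hset.symm
    exact (e2.trans e3).symm.isEmbedding.discreteTopology
  · -- spanning
    rw [hset, show ⇑h = ⇑(psiZ (n := n) Z) from rfl,
      Submodule.span_image, hL.2, Submodule.map_top, LinearMap.range_eq_top.mpr hbij.2]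

end
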